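/- Let H be a real Hilbert space, ℓ : H → ℝ a linear map, s ∈ H, n ≥ 1 an integer, λ > 0, and M a collection of finite-dimensional subspaces of H. Assume that for all m, m' ∈ M, ‖w_{m+m'}‖² ≤ λ (D_m + D_{m'}), where m+m' is the subspace spanned by m ∪ m'. Let γ ∈ (0,1) and K > 1 satisfy K(1−γ) > 2/γ + 1. Suppose m̂ ∈ M minimizes −‖ŝ_m‖² + (λ/n)·D_m over m ∈ M, and m₀ ∈ M minimizes ‖P_m s − s‖² + (λ/(Kn))·D_m over m ∈ M. Then (1 − (2/γ+1)/(K(1−γ)))·‖P_{m₀}s − s‖² ≤ (1 + (2/γ−1)/(K(1−γ)))·‖ŝ_{m̂} − s‖² + ((2/γ+1)/(K(1−γ)))·n^{−1}‖w_{m₀}‖² + (2γ/(K(1−γ)))·(λ/n)·D_{m₀}. -/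

import Mathlib

open scoped RealInnerProductSpace

set_option maxHeartbeats 1000000 in
/-- the deterministic core of Lemma 2: bound on `‖P_{m₀} s - s‖²` on the
event where the noise projections are controlled. -/
theorem stmt_2 {H : Type*} [NormedAddCommGroup H] [InnerProductSpace ℝ H]
    (ℓ : H →ₗ[ℝ] ℝ) (s : H) (n : ℕ) (hn : 1 ≤ n) (lam : ℝ) (hlam : 0 < lam)
    (M : Set (Submodule ℝ H)) (hfin : ∀ m ∈ M, FiniteDimensional ℝ m)
    -- `proj V` is the orthogonal projection of `s` onto `V`
    (proj : Submodule ℝ H → H)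
    (hproj : ∀ V : Submodule ℝ H, FiniteDimensional ℝ V →
      proj V ∈ V ∧ s - proj V ∈ Vᗮ)
    -- `w V` is the unique vector of `V` representing `ℓ` on `V`
    (w : Submodule ℝ H → H)
    (hw : ∀ V : Submodule ℝ H, FiniteDimensional ℝ V →
      w V ∈ V ∧ ∀ x ∈ V, ⟪w V, x⟫ = ℓ x)
    -- control of the noise on sums of pairs of models
    (hnoise : ∀ m ∈ M, ∀ m' ∈ M,
      ‖w (m ⊔ m')‖ ^ 2 ≤
        lam * ((Module.finrank ℝ m : ℝ) + (Module.finrank ℝ m' : ℝ)))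
    (γ : ℝ) (hγ0 : 0 < γ) (hγ1 : γ < 1)
    (K : ℝ) (hK : 1 < K) (hKγ : 2 / γ + 1 < K * (1 - γ))
    -- the least-squares estimators
    (shat : Submodule ℝ H → H)
    (hshat : ∀ m : Submodule ℝ H, shat m = proj m + ((n : ℝ) ^ (-(1 / 2 : ℝ))) • w m)
    -- `mhat` minimizes the penalized criterion
    (mhat : Submodule ℝ H) (hmhat : mhat ∈ M)
    (hminhat : ∀ m ∈ M,
      -‖shat mhat‖ ^ 2 + lam / n * (Module.finrank ℝ mhat : ℝ) ≤
        -‖shat m‖ ^ 2 + lam / n * (Module.finrank ℝ m : ℝ))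
    -- `m₀` minimizes the deterministic criterion with penalty `λ/(Kn)`
    (m₀ : Submodule ℝ H) (hm₀ : m₀ ∈ M)
    (hminm₀ : ∀ m ∈ M,
      ‖proj m₀ - s‖ ^ 2 + lam / (K * n) * (Module.finrank ℝ m₀ : ℝ) ≤
        ‖proj m - s‖ ^ 2 + lam / (K * n) * (Module.finrank ℝ m : ℝ)) :
    (1 - (2 / γ + 1) / (K * (1 - γ))) * ‖proj m₀ - s‖ ^ 2 ≤
      (1 + (2 / γ - 1) / (K * (1 - γ))) * ‖shat mhat - s‖ ^ 2 +
        (2 / γ + 1) / (K * (1 - γ)) * ((n : ℝ)⁻¹ * ‖w m₀‖ ^ 2) +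
        2 * γ / (K * (1 - γ)) * (lam / n) * (Module.finrank ℝ m₀ : ℝ) := by
  classical
  haveI hFh : FiniteDimensional ℝ mhat := hfin mhat hmhat
  haveI hF0 : FiniteDimensional ℝ m₀ := hfin m₀ hm₀
  haveI hFV : FiniteDimensional ℝ (mhat ⊔ m₀ : Submodule ℝ H) := inferInstance
  have hn0 : (0:ℝ) < n := by
    have : (0:ℕ) < n := by omega
    exact_mod_cast this
  set c : ℝ := (n : ℝ) ^ (-(1 / 2 : ℝ)) with hcdef
  have hc : 0 < c := Real.rpow_pos_of_pos hn0 _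
  have hc2 : c ^ 2 = (n : ℝ)⁻¹ := by
    rw [hcdef, pow_two, ← Real.rpow_add hn0,
      show (-(1/2:ℝ)) + (-(1/2:ℝ)) = -1 by norm_num, Real.rpow_neg_one]
  obtain ⟨hph, hoh⟩ := hproj mhat hFh
  obtain ⟨hp0, ho0⟩ := hproj m₀ hF0
  obtain ⟨hwhm, hwhl⟩ := hw mhat hFh
  obtain ⟨hw0m, hw0l⟩ := hw m₀ hF0
  obtain ⟨hwVm, hwVl⟩ := hw (mhat ⊔ m₀) hFV
  have hsmem : ∀ (m : Submodule ℝ H), proj m ∈ m → w m ∈ m → shat m ∈ m := by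
    intro m h1 h2
    rw [hshat m]
    exact Submodule.add_mem _ h1 (Submodule.smul_mem _ _ h2)
  have hshm : shat mhat ∈ mhat := hsmem _ hph hwhm
  have hs0m : shat m₀ ∈ m₀ := hsmem _ hp0 hw0m
  -- key identity: ‖ŝ_m - s‖² = -‖ŝ_m‖² + 2 c ℓ(ŝ_m) + ‖s‖²
  have key : ∀ (m : Submodule ℝ H), proj m ∈ m → s - proj m ∈ mᗮ → w m ∈ m →
      (∀ x ∈ m, ⟪w m, x⟫ = ℓ x) →
      ‖shat m - s‖ ^ 2 = -‖shat m‖ ^ 2 + 2 * c * ℓ (shat m) + ‖s‖ ^ 2 := by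
    intro m h1 h2 h3 h4
    have hsm : shat m ∈ m := hsmem _ h1 h3
    have e0 : ⟪shat m, s - proj m⟫ = 0 :=
      (Submodule.mem_orthogonal m _).mp h2 (shat m) hsm
    have e1 : ⟪shat m, s⟫ = ⟪shat m, proj m⟫ := by
      rw [inner_sub_right] at e0
      linarith
    have e2 : ⟪shat m, shat m⟫ = ⟪shat m, proj m⟫ + c * ℓ (shat m) := by
      nth_rewrite 2 [hshat m]
      rw [inner_add_right, real_inner_smul_right]
      have e : ⟪shat m, w m⟫ = ℓ (shat m) := by
        rw [real_inner_comm]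
        exact h4 _ hsm
      rw [e]
    have e3 : ‖shat m - s‖ ^ 2 = ‖shat m‖ ^ 2 - 2 * ⟪shat m, s⟫ + ‖s‖ ^ 2 :=
      norm_sub_sq_real _ _
    have e4 : ⟪shat m, shat m⟫ = ‖shat m‖ ^ 2 := real_inner_self_eq_norm_sq _
    linarith
  -- Pythagoras
  have pyth : ∀ (m : Submodule ℝ H), proj m ∈ m → s - proj m ∈ mᗮ → w m ∈ m →
      ‖shat m - s‖ ^ 2 = ‖proj m - s‖ ^ 2 + (n:ℝ)⁻¹ * ‖w m‖ ^ 2 := by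
    intro m h1 h2 h3
    have hdec : shat m - s = (proj m - s) + c • w m := by rw [hshat m]; abel
    have h0 : ⟪proj m - s, c • w m⟫ = 0 := by
      have hwo : ⟪w m, s - proj m⟫ = 0 :=
        (Submodule.mem_orthogonal m _).mp h2 (w m) h3
      rw [real_inner_smul_right, real_inner_comm]
      have e : ⟪w m, proj m - s⟫ = - ⟪w m, s - proj m⟫ := by
        rw [show proj m - s = -(s - proj m) from by abel, inner_neg_right]
      rw [e, hwo]
      ring
    rw [hdec, norm_add_sq_real, h0, norm_smul, Real.norm_eq_abs, abs_of_pos hc,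
      mul_pow, hc2]
    ring
  -- step 1 : penalized comparison rewritten with the key identity
  have k1 := key mhat hph hoh hwhm hwhl
  have k2 := key m₀ hp0 ho0 hw0m hw0l
  have hmm := hminhat m₀ hm₀
  have step1 : ‖shat mhat - s‖ ^ 2 - 2*c*ℓ (shat mhat)
        + lam/n * (Module.finrank ℝ mhat : ℝ)
      ≤ ‖shat m₀ - s‖ ^ 2 - 2*c*ℓ (shat m₀)
        + lam/n * (Module.finrank ℝ m₀ : ℝ) := by linarith
  -- step 2 : linear functional bound via the representing vector on the sup
  have hshV : shat mhat ∈ mhat ⊔ m₀ := Submodule.mem_sup_left hshm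
  have hs0V : shat m₀ ∈ mhat ⊔ m₀ := Submodule.mem_sup_right hs0m
  have step2 : ℓ (shat mhat) - ℓ (shat m₀)
      ≤ ‖w (mhat ⊔ m₀)‖ * (‖shat mhat - s‖ + ‖shat m₀ - s‖) := by
    have h1 : ℓ (shat mhat) - ℓ (shat m₀)
        = ⟪w (mhat ⊔ m₀), shat mhat - shat m₀⟫ := by
      rw [hwVl _ (Submodule.sub_mem _ hshV hs0V), map_sub]
    have h2 : ‖shat mhat - shat m₀‖ ≤ ‖shat mhat - s‖ + ‖shat m₀ - s‖ := by
      have e : shat mhat - shat m₀ = (shat mhat - s) - (shat m₀ - s) := by abel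
      rw [e]
      exact norm_sub_le _ _
    calc ℓ (shat mhat) - ℓ (shat m₀)
        = ⟪w (mhat ⊔ m₀), shat mhat - shat m₀⟫ := h1
      _ ≤ ‖w (mhat ⊔ m₀)‖ * ‖shat mhat - shat m₀‖ := real_inner_le_norm _ _
      _ ≤ _ := mul_le_mul_of_nonneg_left h2 (norm_nonneg _)
  -- Pythagoras instances
  have step4 : ‖shat m₀ - s‖ ^ 2
      = ‖proj m₀ - s‖ ^ 2 + (n:ℝ)⁻¹ * ‖w m₀‖ ^ 2 := pyth m₀ hp0 ho0 hw0m
  have p5 := pyth mhat hph hoh hwhm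
  have step5 : ‖proj mhat - s‖ ^ 2 ≤ ‖shat mhat - s‖ ^ 2 := by
    have hnn : (0:ℝ) ≤ (n:ℝ)⁻¹ * ‖w mhat‖ ^ 2 := by positivity
    linarith
  -- noise control on the sup, scaled by 1/n
  have hWn := hnoise mhat hmhat m₀ hm₀
  have hcW : (c * ‖w (mhat ⊔ m₀)‖) ^ 2
      ≤ lam/n * (Module.finrank ℝ mhat : ℝ) + lam/n * (Module.finrank ℝ m₀ : ℝ) := by
    have h1 : (n:ℝ)⁻¹ * ‖w (mhat ⊔ m₀)‖ ^ 2
        ≤ (n:ℝ)⁻¹ * (lam * ((Module.finrank ℝ mhat : ℝ) + (Module.finrank ℝ m₀ : ℝ))) :=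
      mul_le_mul_of_nonneg_left hWn (by positivity)
    have h2 : (c * ‖w (mhat ⊔ m₀)‖) ^ 2 = (n:ℝ)⁻¹ * ‖w (mhat ⊔ m₀)‖ ^ 2 := by
      rw [mul_pow, hc2]
    rw [h2]
    calc (n:ℝ)⁻¹ * ‖w (mhat ⊔ m₀)‖ ^ 2
        ≤ (n:ℝ)⁻¹ * (lam * ((Module.finrank ℝ mhat : ℝ) + (Module.finrank ℝ m₀ : ℝ))) := h1
      _ = lam/n * (Module.finrank ℝ mhat : ℝ) + lam/n * (Module.finrank ℝ m₀ : ℝ) := by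
            ring
  -- Young's inequalities
  have Y1 : 2*γ*(c*‖w (mhat ⊔ m₀)‖)*‖shat mhat - s‖
      ≤ 2*‖shat mhat - s‖^2 + γ^2/2*(c*‖w (mhat ⊔ m₀)‖)^2 := by
    nlinarith [sq_nonneg (2*‖shat mhat - s‖ - γ*(c*‖w (mhat ⊔ m₀)‖))]
  have Y2 : 2*γ*(c*‖w (mhat ⊔ m₀)‖)*‖shat m₀ - s‖
      ≤ 2*‖shat m₀ - s‖^2 + γ^2/2*(c*‖w (mhat ⊔ m₀)‖)^2 := by
    nlinarith [sq_nonneg (2*‖shat m₀ - s‖ - γ*(c*‖w (mhat ⊔ m₀)‖))]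
  -- scaled versions
  have s1γ := mul_le_mul_of_nonneg_left step1 hγ0.le
  have s2γ := mul_le_mul_of_nonneg_left step2 (by positivity : (0:ℝ) ≤ 2*γ*c)
  have hWγ := mul_le_mul_of_nonneg_left hcW (sq_nonneg γ)
  have A' : γ*(1-γ)*(lam/n * (Module.finrank ℝ mhat : ℝ))
      ≤ (2-γ)*‖shat mhat - s‖^2 + (2+γ)*‖shat m₀ - s‖^2
        + γ*(1+γ)*(lam/n * (Module.finrank ℝ m₀ : ℝ)) := by
    linarith [s1γ, s2γ, Y1, Y2, hWγ]
  -- oracle property of m₀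
  have hK0 : (0:ℝ) < K := lt_trans one_pos hK
  have hKne : K ≠ 0 := hK0.ne'
  have hnne : (n:ℝ) ≠ 0 := hn0.ne'
  have hor := hminm₀ mhat hmhat
  have e0 : K*(lam/(K*n) * (Module.finrank ℝ m₀ : ℝ))
      = lam/n * (Module.finrank ℝ m₀ : ℝ) := by
    field_simp
  have ehh : K*(lam/(K*n) * (Module.finrank ℝ mhat : ℝ))
      = lam/n * (Module.finrank ℝ mhat : ℝ) := by
    field_simp
  have horK := mul_le_mul_of_nonneg_left hor hK0.le
  have oracle2 : K*‖proj m₀ - s‖^2 + lam/n * (Module.finrank ℝ m₀ : ℝ)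
      ≤ K*‖proj mhat - s‖^2 + lam/n * (Module.finrank ℝ mhat : ℝ) := by
    linarith [horK, e0, ehh]
  have hγ1' : (0:ℝ) < 1 - γ := by linarith
  have h6m := mul_le_mul_of_nonneg_left oracle2 (by positivity : (0:ℝ) ≤ γ*(1-γ))
  have hpm := mul_le_mul_of_nonneg_left step5 (by positivity : (0:ℝ) ≤ γ*(1-γ)*K)
  have s4γ : γ*‖shat m₀ - s‖ ^ 2
      = γ*(‖proj m₀ - s‖ ^ 2 + (n:ℝ)⁻¹ * ‖w m₀‖ ^ 2) := by rw [step4]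
  -- the clean polynomial inequality
  have B : (γ*(K*(1-γ)) - (2+γ))*‖proj m₀ - s‖^2
      ≤ (γ*(K*(1-γ)) + (2-γ))*‖shat mhat - s‖^2
        + (2+γ)*((n:ℝ)⁻¹ * ‖w m₀‖ ^ 2)
        + 2*γ^2*(lam/n * (Module.finrank ℝ m₀ : ℝ)) := by
    linarith [A', h6m, hpm, step4, s4γ]
  -- conclude by dividing by γ * (K * (1 - γ)) > 0
  have hQ : (0:ℝ) < γ*(K*(1-γ)) := by positivity
  rw [← sub_nonneg]
  have h := div_nonneg (sub_nonneg.mpr B) hQ.le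
  convert h using 1
  · rfl
  have hγne : γ ≠ 0 := hγ0.ne'
  have h1γ : (1 - γ) ≠ 0 := hγ1'.ne'
  rw [eq_div_iff hQ.ne']
  field_simp
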